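/- Let B : V × V → W be a nonzero symmetric bilinear map with dim V = 2 satisfying ⟨B(X,Z), B(Y,Z)⟩ = C·⟨X,Y⟩·⟨Z,Z⟩ for all X,Y,Z and some constant C > 0. Then for any orthonormal basis X, Y of V, the vectors ξ = B(X,X), ζ = B(Y,Y), η = B(X,Y) satisfy: ξ = −ζ, |ξ|² = |η|² = C, and ⟨ξ, η⟩ = 0. In particular the image of B spans a 2-dimensional subspace of W. -/
import Mathlib
open scoped RealInnerProductSpace

lemma aux_onb {V W : Type*} [NormedAddCommGroup V] [InnerProductSpace ℝ V]
    [NormedAddCommGroup W] [InnerProductSpace ℝ W]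
    (C : ℝ) (hC : 0 < C)
    (B : V →ₗ[ℝ] V →ₗ[ℝ] W) (hsymm : ∀ X Y : V, B X Y = B Y X)
    (hB : ∀ X Y Z : V, ⟪B X Z, B Y Z⟫ = C * ⟪X, Y⟫ * ⟪Z, Z⟫)
    (X Y : V) (hX : ‖X‖ = 1) (hY : ‖Y‖ = 1) (hXY : ⟪X, Y⟫ = 0) :
    B X X = -(B Y Y) ∧ ‖B X X‖ ^ 2 = C ∧ ‖B X Y‖ ^ 2 = C ∧ ⟪B X X, B X Y⟫ = 0 := by
  have hXX : ⟪X, X⟫ = 1 := by rw [real_inner_self_eq_norm_sq, hX]; norm_num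
  have hYY : ⟪Y, Y⟫ = 1 := by rw [real_inner_self_eq_norm_sq, hY]; norm_num
  have hξ : ⟪B X X, B X X⟫ = C := by have := hB X X X; rw [hXX] at this; linarith
  have hζ : ⟪B Y Y, B Y Y⟫ = C := by have := hB Y Y Y; rw [hYY] at this; linarith
  have hη : ⟪B X Y, B X Y⟫ = C := by have := hB X X Y; rw [hXX, hYY] at this; linarith
  have hξη : ⟪B X X, B X Y⟫ = 0 := by
    have := hB X Y X; rw [hXY, hXX, hsymm Y X] at this; linarith
  have hηζ : ⟪B X Y, B Y Y⟫ = 0 := by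
    have := hB X Y Y; rw [hXY, hYY] at this; linarith
  have hξζ : ⟪B X X, B Y Y⟫ = -C := by
    have h1 := hB X Y (X + Y)
    rw [hXY] at h1
    simp only [map_add, inner_add_left, inner_add_right, hsymm Y X] at h1
    rw [hη, hηζ] at h1
    linarith
  have hsum : B X X + B Y Y = 0 := by
    have : ⟪B X X + B Y Y, B X X + B Y Y⟫ = 0 := by
      simp only [inner_add_left, inner_add_right, hξ, hζ, hξζ]
      linarith [real_inner_comm ((B Y) Y) ((B X) X), hξζ]
    exact inner_self_eq_zero.mp this
  refine ⟨eq_neg_of_add_eq_zero_left hsum, ?_, ?_, hξη⟩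
  · rw [← real_inner_self_eq_norm_sq]; exact hξ
  · rw [← real_inner_self_eq_norm_sq]; exact hη

theorem stmt2 {V W : Type*} [NormedAddCommGroup V] [InnerProductSpace ℝ V]
    [NormedAddCommGroup W] [InnerProductSpace ℝ W] [FiniteDimensional ℝ V]
    (hdim : Module.finrank ℝ V = 2) (C : ℝ) (hC : 0 < C)
    (B : V →ₗ[ℝ] V →ₗ[ℝ] W) (hB0 : B ≠ 0) (hsymm : ∀ X Y : V, B X Y = B Y X)
    (hB : ∀ X Y Z : V, ⟪B X Z, B Y Z⟫ = C * ⟪X, Y⟫ * ⟪Z, Z⟫) :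
    (∀ X Y : V, ‖X‖ = 1 → ‖Y‖ = 1 → ⟪X, Y⟫ = 0 →
      B X X = -(B Y Y) ∧ ‖B X X‖ ^ 2 = C ∧ ‖B X Y‖ ^ 2 = C ∧ ⟪B X X, B X Y⟫ = 0) ∧
    Module.finrank ℝ
      (Submodule.span ℝ (Set.range fun p : V × V => B p.1 p.2)) = 2 := by
  refine ⟨fun X Y hX hY hXY => aux_onb C hC B hsymm hB X Y hX hY hXY, ?_⟩
  -- orthonormal basis
  set b : OrthonormalBasis (Fin 2) ℝ V := (stdOrthonormalBasis ℝ V).reindex (finCongr hdim)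
  set X := b 0
  set Y := b 1
  have hX : ‖X‖ = 1 := b.orthonormal.1 0
  have hY : ‖Y‖ = 1 := b.orthonormal.1 1
  have hXY : ⟪X, Y⟫ = 0 := b.orthonormal.2 (by decide : (0 : Fin 2) ≠ 1)
  obtain ⟨hneg, hξ, hη, hξη⟩ := aux_onb C hC B hsymm hB X Y hX hY hXY
  set ξ := B X X with hξdef
  set η := B X Y with hηdef
  -- span equality
  have hspan : Submodule.span ℝ (Set.range fun p : V × V => B p.1 p.2)
      = Submodule.span ℝ (Set.range ![ξ, η]) := by
    apply le_antisymm
    · rw [Submodule.span_le]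
      rintro _ ⟨⟨v, w⟩, rfl⟩
      have hv : v = ⟪X, v⟫ • X + ⟪Y, v⟫ • Y := by
        have := b.sum_repr' v
        rw [Fin.sum_univ_two] at this
        exact this.symm
      have hw : w = ⟪X, w⟫ • X + ⟪Y, w⟫ • Y := by
        have := b.sum_repr' w
        rw [Fin.sum_univ_two] at this
        exact this.symm
      have hξmem : ξ ∈ Submodule.span ℝ (Set.range ![ξ, η]) :=
        Submodule.subset_span ⟨0, rfl⟩
      have hηmem : η ∈ Submodule.span ℝ (Set.range ![ξ, η]) :=
        Submodule.subset_span ⟨1, rfl⟩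
      simp only
      rw [hv, hw]
      simp only [map_add, map_smul, LinearMap.add_apply, LinearMap.smul_apply]
      rw [hsymm Y X, show B Y Y = -ξ by rw [hneg, neg_neg], ← hξdef, ← hηdef]
      exact Submodule.add_mem _
        (Submodule.smul_mem _ _ (Submodule.add_mem _ (Submodule.smul_mem _ _ hξmem)
          (Submodule.smul_mem _ _ hηmem)))
        (Submodule.smul_mem _ _ (Submodule.add_mem _ (Submodule.smul_mem _ _ hηmem)
          (Submodule.smul_mem _ _ (Submodule.neg_mem _ hξmem))))
    · rw [Submodule.span_le]
      rintro _ ⟨i, rfl⟩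
      fin_cases i
      · exact Submodule.subset_span ⟨(X, X), rfl⟩
      · exact Submodule.subset_span ⟨(X, Y), rfl⟩
  rw [hspan]
  have hli : LinearIndependent ℝ ![ξ, η] := by
    rw [LinearIndependent.pair_iff]
    intro s t hst
    have h1 : ⟪ξ, s • ξ + t • η⟫ = 0 := by rw [hst, inner_zero_right]
    have h2 : ⟪η, s • ξ + t • η⟫ = 0 := by rw [hst, inner_zero_right]
    have hηξ : ⟪η, ξ⟫ = (0 : ℝ) := by rw [real_inner_comm]; exact hξη
    rw [inner_add_right, real_inner_smul_right, real_inner_smul_right,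
      real_inner_self_eq_norm_sq, hξ, hξη] at h1
    rw [inner_add_right, real_inner_smul_right, real_inner_smul_right, hηξ,
      real_inner_self_eq_norm_sq, hη] at h2
    constructor
    · have : s * C = 0 := by linarith
      exact (mul_eq_zero.mp this).resolve_right (ne_of_gt hC)
    · have : t * C = 0 := by linarith
      exact (mul_eq_zero.mp this).resolve_right (ne_of_gt hC)
  rw [finrank_span_eq_card hli, Fintype.card_fin]
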